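/- If M is a co-Kasch right R-module and K is a submodule of M contained in Rad(M), then M/K is a co-Kasch module. -/

import Mathlib

def IsCoKasch (R : Type*) [Ring R] (M : Type*) [AddCommGroup M] [Module R M] : Prop :=
  ∀ (K : Submodule R M) (S : Submodule R (M ⧸ K)), IsSimpleModule R S →
    ∃ f : M →ₗ[R] S, Function.Surjective f

/-- If `M` is co-Kasch and `K ⊆ Rad(M)` (the intersection of all maximal
submodules of `M`), then `M/K` is co-Kasch. -/
theorem stmt6 (R : Type u) [Ring R] (M : Type u) [AddCommGroup M] [Module R M]
    (hM : IsCoKasch R M) (K : Submodule R M)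
    (hK : K ≤ sInf {N : Submodule R M | IsCoatom N}) :
    IsCoKasch R (M ⧸ K) := by
  intro L S hS
  -- composite projection M → (M/K)/L
  set q : M →ₗ[R] (M ⧸ K) ⧸ L := L.mkQ.comp K.mkQ with hq_def
  have hq : Function.Surjective q := (Submodule.mkQ_surjective L).comp (Submodule.mkQ_surjective K)
  let e : (M ⧸ LinearMap.ker q) ≃ₗ[R] (M ⧸ K) ⧸ L := q.quotKerEquivOfSurjective hq
  set S' : Submodule R (M ⧸ LinearMap.ker q) := S.map (e.symm : (M ⧸ K) ⧸ L →ₗ[R] M ⧸ LinearMap.ker q) with hS'_def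
  have eS : S' ≃ₗ[R] S := ((e.symm.submoduleMap S).symm : S' ≃ₗ[R] S)
  haveI : IsSimpleModule R S := hS
  haveI hS' : IsSimpleModule R S' := IsSimpleModule.congr eS
  obtain ⟨f, hf⟩ := hM (LinearMap.ker q) S' hS'
  -- g : M →ₗ S surjective
  set g : M →ₗ[R] S := eS.toLinearMap.comp f with hg_def
  have hg : Function.Surjective g := eS.surjective.comp hf
  have hker : IsCoatom (LinearMap.ker g) :=
    LinearMap.isCoatom_ker_of_surjective hg
  have hKg : K ≤ LinearMap.ker g := le_trans hK (sInf_le hker)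
  refine ⟨K.liftQ g hKg, ?_⟩
  intro s
  obtain ⟨m, hm⟩ := hg s
  exact ⟨K.mkQ m, by simpa using hm⟩
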